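/- arXiv:1910.05172 — 2 statements merged into one kernel-verified Lean document; each statement's English description precedes it below -/
import Mathlib

section
/- Let C have equalizers, products, and exponentials, and T be a strong monad on C with costrength rst (obtained from the strength via the symmetry). For T-algebras (A, f_A), (B, f_B), define A ⊸ B as the equalizer of λ(ev ∘ (id × f_A)) and λ(f_B ∘ T ev ∘ rst) : (A ⇒ B) → (T A ⇒ B). Then for every object C₀, there is a bijection between morphisms C₀ → A ⊸ B and morphisms h : C₀ × A → B that are T-algebra homomorphisms in their right-hand argument, natural via currying along the equalizer inclusion. -/
open CategoryTheory MonoidalCategory CartesianMonoidalCategory SemiCartesianMonoidalCategory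

variable {C : Type*} [Category C] [CartesianMonoidalCategory C]

attribute [local instance] BraidedCategory.ofCartesianMonoidalCategory

/-- A (left) tensorial strength for a monad `T` on a cartesian monoidal category,
together with the strength laws used in the paper. -/
structure CartesianStrength (T : Monad C) where
  st : ∀ X Y : C, X ⊗ T.obj Y ⟶ T.obj (X ⊗ Y)
  st_natural : ∀ {X X' Y Y' : C} (f : X ⟶ X') (g : Y ⟶ Y'),
    (f ⊗ₘ T.map g) ≫ st X' Y' = st X Y ≫ T.map (f ⊗ₘ g)
  st_unit : ∀ X Y : C, (X ◁ T.η.app Y) ≫ st X Y = T.η.app (X ⊗ Y)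
  st_mult : ∀ X Y : C, (X ◁ T.μ.app Y) ≫ st X Y =
    st X (T.obj Y) ≫ T.map (st X Y) ≫ T.μ.app (X ⊗ Y)
  st_snd : ∀ X Y : C, st X Y ≫ T.map (snd X Y) = snd X (T.obj Y)
  st_assoc : ∀ X Y Z : C, st (X ⊗ Y) Z ≫ T.map (α_ X Y Z).hom =
    (α_ X Y (T.obj Z)).hom ≫ (X ◁ st Y Z) ≫ st X (Y ⊗ Z)

/-- `h : D ⊗ A ⟶ B` is a `T`-algebra homomorphism in its right-hand argument. -/
def IsRightAlgHom {T : Monad C} (S : CartesianStrength T) (D : C)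
    (X Y : Monad.Algebra T) (h : D ⊗ X.A ⟶ Y.A) : Prop :=
  (D ◁ X.a) ≫ h = S.st D X.A ≫ T.map h ≫ Y.a

open Limits CartesianClosed MonoidalClosed in
/-- Key computation: for `g' : C₀ ⟶ A ⟹ B`, composing with the two parallel maps of the
equalizer corresponds, after uncurrying, to the two sides of the right-algebra-homomorphism
condition. -/
theorem key_comp [MonoidalClosed C] {T : Monad C}
    (S : CartesianStrength T) (X Y : Monad.Algebra T) {C₀ : C} (h : C₀ ⊗ X.A ⟶ Y.A) :
    (curry ((β_ X.A C₀).hom ≫ h) ≫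
        curry ((X.a ▷ (X.A ⟹ Y.A)) ≫ (ihom.ev X.A).app Y.A) =
      curry ((β_ X.A C₀).hom ≫ h) ≫
        curry ((β_ (T.obj X.A) (X.A ⟹ Y.A)).hom ≫ S.st (X.A ⟹ Y.A) X.A ≫
          T.map ((β_ (X.A ⟹ Y.A) X.A).hom ≫ (ihom.ev X.A).app Y.A) ≫ Y.a)) ↔
    IsRightAlgHom S C₀ X Y h := by
  set g' : C₀ ⟶ X.A ⟹ Y.A := curry ((β_ X.A C₀).hom ≫ h) with hg'
  have hunc : uncurry g' = (β_ X.A C₀).hom ≫ h := uncurry_curry _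
  -- rewrite the left composite
  have hL : g' ≫ curry ((X.a ▷ (X.A ⟹ Y.A)) ≫ (ihom.ev X.A).app Y.A)
      = curry ((β_ (T.obj X.A) C₀).hom ≫ (C₀ ◁ X.a) ≫ h) := by
    rw [← curry_natural_left]
    congr 1
    rw [← Category.assoc, whisker_exchange, Category.assoc, ← uncurry_eq, hunc,
      ← Category.assoc, BraidedCategory.braiding_naturality_left, Category.assoc]
  have hR : g' ≫ curry ((β_ (T.obj X.A) (X.A ⟹ Y.A)).hom ≫ S.st (X.A ⟹ Y.A) X.A ≫
        T.map ((β_ (X.A ⟹ Y.A) X.A).hom ≫ (ihom.ev X.A).app Y.A) ≫ Y.a)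
      = curry ((β_ (T.obj X.A) C₀).hom ≫ S.st C₀ X.A ≫ T.map h ≫ Y.a) := by
    rw [← curry_natural_left]
    congr 1
    have e1 : (T.obj X.A ◁ g') ≫ (β_ (T.obj X.A) (X.A ⟹ Y.A)).hom
        = (β_ (T.obj X.A) C₀).hom ≫ (g' ▷ T.obj X.A) :=
      BraidedCategory.braiding_naturality_right _ _
    have e2 : (g' ▷ T.obj X.A) ≫ S.st (X.A ⟹ Y.A) X.A
        = S.st C₀ X.A ≫ T.map (g' ▷ X.A) := by
      have := S.st_natural g' (𝟙 X.A)
      simpa [tensorHom_id] using this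
    have e3 : (g' ▷ X.A) ≫ (β_ (X.A ⟹ Y.A) X.A).hom ≫ (ihom.ev X.A).app Y.A = h := by
      rw [← Category.assoc, BraidedCategory.braiding_naturality_left, Category.assoc,
        ← uncurry_eq, hunc, ← Category.assoc, SymmetricCategory.symmetry, Category.id_comp]
    calc (T.obj X.A ◁ g') ≫ (β_ (T.obj X.A) (X.A ⟹ Y.A)).hom ≫ S.st (X.A ⟹ Y.A) X.A ≫
          T.map ((β_ (X.A ⟹ Y.A) X.A).hom ≫ (ihom.ev X.A).app Y.A) ≫ Y.a
        = (β_ (T.obj X.A) C₀).hom ≫ (g' ▷ T.obj X.A) ≫ S.st (X.A ⟹ Y.A) X.A ≫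
          T.map ((β_ (X.A ⟹ Y.A) X.A).hom ≫ (ihom.ev X.A).app Y.A) ≫ Y.a := by
          rw [← Category.assoc, e1, Category.assoc]
      _ = (β_ (T.obj X.A) C₀).hom ≫ S.st C₀ X.A ≫ T.map (g' ▷ X.A) ≫
          T.map ((β_ (X.A ⟹ Y.A) X.A).hom ≫ (ihom.ev X.A).app Y.A) ≫ Y.a := by
          rw [← Category.assoc ((g' ▷ T.obj X.A)), e2]; simp
      _ = (β_ (T.obj X.A) C₀).hom ≫ S.st C₀ X.A ≫ T.map h ≫ Y.a := by
          rw [← Functor.map_comp_assoc, e3]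
  rw [hL, hR]
  constructor
  · intro e
    have := curry_injective e
    have := (cancel_epi (β_ (T.obj X.A) C₀).hom).mp this
    exact this
  · intro e
    unfold IsRightAlgHom at e
    rw [e]

open Limits CartesianClosed MonoidalClosed in
/-- With `A ⊸ B` defined as the equalizer of `λ(ev ∘ (f_A × id))` and
`λ(f_B ∘ T ev ∘ rst) : (A ⟹ B) ⟶ (T A ⟹ B)` (where the costrength `rst` is obtained
from the strength via the symmetry), morphisms `C₀ ⟶ A ⊸ B` are in bijection with
morphisms `h : C₀ ⊗ A ⟶ B` that are `T`-algebra homomorphisms in their right-hand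
argument, the bijection being compatible with currying along the equalizer inclusion. -/
theorem external_exponent_bijection [MonoidalClosed C] [HasEqualizers C] {T : Monad C}
    (S : CartesianStrength T) (X Y : Monad.Algebra T) (C₀ : C) :
    ∃ Θ : {h : C₀ ⊗ X.A ⟶ Y.A // IsRightAlgHom S C₀ X Y h} ≃
        (C₀ ⟶ equalizer
          (curry ((X.a ▷ (X.A ⟹ Y.A)) ≫ (ihom.ev X.A).app Y.A))
          (curry ((β_ (T.obj X.A) (X.A ⟹ Y.A)).hom ≫ S.st (X.A ⟹ Y.A) X.A ≫
            T.map ((β_ (X.A ⟹ Y.A) X.A).hom ≫ (ihom.ev X.A).app Y.A) ≫ Y.a))),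
      ∀ h, Θ h ≫ equalizer.ι
          (curry ((X.a ▷ (X.A ⟹ Y.A)) ≫ (ihom.ev X.A).app Y.A))
          (curry ((β_ (T.obj X.A) (X.A ⟹ Y.A)).hom ≫ S.st (X.A ⟹ Y.A) X.A ≫
            T.map ((β_ (X.A ⟹ Y.A) X.A).hom ≫ (ihom.ev X.A).app Y.A) ≫ Y.a)) =
        curry ((β_ X.A C₀).hom ≫ h.1) := by
  set f₁ := curry ((X.a ▷ (X.A ⟹ Y.A)) ≫ (ihom.ev X.A).app Y.A) with hf₁
  set f₂ := curry ((β_ (T.obj X.A) (X.A ⟹ Y.A)).hom ≫ S.st (X.A ⟹ Y.A) X.A ≫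
    T.map ((β_ (X.A ⟹ Y.A) X.A).hom ≫ (ihom.ev X.A).app Y.A) ≫ Y.a) with hf₂
  -- the inverse construction
  have inv_prop : ∀ g : C₀ ⟶ equalizer f₁ f₂,
      IsRightAlgHom S C₀ X Y ((β_ C₀ X.A).hom ≫ uncurry (g ≫ equalizer.ι f₁ f₂)) := by
    intro g
    apply (key_comp S X Y _).mp
    have hc : curry ((β_ X.A C₀).hom ≫ (β_ C₀ X.A).hom ≫ uncurry (g ≫ equalizer.ι f₁ f₂))
        = g ≫ equalizer.ι f₁ f₂ := by
      rw [← Category.assoc, SymmetricCategory.symmetry, Category.id_comp, curry_uncurry]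
    rw [hc, Category.assoc, Category.assoc, equalizer.condition]
  refine ⟨{
    toFun := fun h => equalizer.lift (curry ((β_ X.A C₀).hom ≫ h.1))
      ((key_comp S X Y h.1).mpr h.2)
    invFun := fun g => ⟨(β_ C₀ X.A).hom ≫ uncurry (g ≫ equalizer.ι f₁ f₂), inv_prop g⟩
    left_inv := ?_
    right_inv := ?_ }, ?_⟩
  · intro h
    ext
    simp only [equalizer.lift_ι, uncurry_curry]
    rw [← Category.assoc, SymmetricCategory.symmetry, Category.id_comp]
  · intro g
    apply equalizer.hom_ext
    rw [equalizer.lift_ι]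
    rw [← Category.assoc, SymmetricCategory.symmetry, Category.id_comp, curry_uncurry]
  · intro h
    exact equalizer.lift_ι _ _
end

section
/- With A ⊸ B defined as the equalizer e : A ⊸ B → (A ⇒ B) of λ(ev ∘ (id × f_A)) and λ(f_B ∘ T ev ∘ rst), the morphism ev ∘ (e × id) : (A ⊸ B) × A → B is a T-algebra homomorphism in its right-hand argument. -/
open CategoryTheory MonoidalCategory CartesianMonoidalCategory

variable {C : Type*} [Category C] [CartesianMonoidalCategory C]

attribute [local instance] BraidedCategory.ofCartesianMonoidalCategory

open Limits CartesianClosed MonoidalClosed in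
/-- With `e : A ⊸ B ⟶ (A ⟹ B)` the equalizer of `λ(ev ∘ (f_A × id))` and
`λ(f_B ∘ T ev ∘ rst)`, the morphism `ev ∘ (e × id) : (A ⊸ B) ⊗ A ⟶ B` is a
`T`-algebra homomorphism in its right-hand argument. -/
theorem ev_equalizer_isRightAlgHom [MonoidalClosed C] [HasEqualizers C] {T : Monad C}
    (S : CartesianStrength T) (X Y : Monad.Algebra T) :
    IsRightAlgHom S
      (equalizer
        (curry ((X.a ▷ (X.A ⟹ Y.A)) ≫ (ihom.ev X.A).app Y.A))
        (curry ((β_ (T.obj X.A) (X.A ⟹ Y.A)).hom ≫ S.st (X.A ⟹ Y.A) X.A ≫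
          T.map ((β_ (X.A ⟹ Y.A) X.A).hom ≫ (ihom.ev X.A).app Y.A) ≫ Y.a)))
      X Y
      ((β_ _ X.A).hom ≫
        (X.A ◁ equalizer.ι
          (curry ((X.a ▷ (X.A ⟹ Y.A)) ≫ (ihom.ev X.A).app Y.A))
          (curry ((β_ (T.obj X.A) (X.A ⟹ Y.A)).hom ≫ S.st (X.A ⟹ Y.A) X.A ≫
            T.map ((β_ (X.A ⟹ Y.A) X.A).hom ≫ (ihom.ev X.A).app Y.A) ≫ Y.a))) ≫
        (ihom.ev X.A).app Y.A) := by
  set F := X.A ⟹ Y.A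
  set e := equalizer.ι
        (curry ((X.a ▷ (X.A ⟹ Y.A)) ≫ (ihom.ev X.A).app Y.A))
        (curry ((β_ (T.obj X.A) (X.A ⟹ Y.A)).hom ≫ S.st (X.A ⟹ Y.A) X.A ≫
          T.map ((β_ (X.A ⟹ Y.A) X.A).hom ≫ (ihom.ev X.A).app Y.A) ≫ Y.a)) with he
  have key : (T.obj X.A ◁ e) ≫ (X.a ▷ F) ≫ (ihom.ev X.A).app Y.A =
      (T.obj X.A ◁ e) ≫ (β_ (T.obj X.A) F).hom ≫ S.st F X.A ≫
        T.map ((β_ F X.A).hom ≫ (ihom.ev X.A).app Y.A) ≫ Y.a := by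
    have := equalizer.condition
        (curry ((X.a ▷ (X.A ⟹ Y.A)) ≫ (ihom.ev X.A).app Y.A))
        (curry ((β_ (T.obj X.A) (X.A ⟹ Y.A)).hom ≫ S.st (X.A ⟹ Y.A) X.A ≫
          T.map ((β_ (X.A ⟹ Y.A) X.A).hom ≫ (ihom.ev X.A).app Y.A) ≫ Y.a))
    rw [← he, ← curry_natural_left, ← curry_natural_left] at this
    simpa only [Category.assoc] using curry_injective this
  unfold IsRightAlgHom
  calc _ ◁ X.a ≫ ((β_ _ X.A).hom ≫ (X.A ◁ e) ≫ (ihom.ev X.A).app Y.A)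
      = (β_ _ (T.obj X.A)).hom ≫ (X.a ▷ _) ≫ (X.A ◁ e) ≫ (ihom.ev X.A).app Y.A := by
        rw [BraidedCategory.braiding_naturality_right_assoc]
    _ = (β_ _ (T.obj X.A)).hom ≫ (T.obj X.A ◁ e) ≫ (X.a ▷ F) ≫ (ihom.ev X.A).app Y.A := by
        slice_lhs 2 3 => rw [← whisker_exchange]
        simp
        rfl
    _ = (β_ _ (T.obj X.A)).hom ≫ (T.obj X.A ◁ e) ≫ (β_ (T.obj X.A) F).hom ≫ S.st F X.A ≫
          T.map ((β_ F X.A).hom ≫ (ihom.ev X.A).app Y.A) ≫ Y.a := by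
        rw [key]
    _ = (e ▷ T.obj X.A) ≫ S.st F X.A ≫
          T.map ((β_ F X.A).hom ≫ (ihom.ev X.A).app Y.A) ≫ Y.a := by
        slice_lhs 1 2 => rw [← BraidedCategory.braiding_naturality_left]
        slice_lhs 2 3 => rw [SymmetricCategory.symmetry]
        simp
    _ = S.st _ X.A ≫ T.map (e ▷ X.A) ≫
          T.map ((β_ F X.A).hom ≫ (ihom.ev X.A).app Y.A) ≫ Y.a := by
        have := S.st_natural e (𝟙 X.A)
        simp only [T.map_id, MonoidalCategory.tensorHom_id] at this
        rw [reassoc_of% this]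
    _ = S.st _ X.A ≫
          T.map ((β_ _ X.A).hom ≫ (X.A ◁ e) ≫ (ihom.ev X.A).app Y.A) ≫ Y.a := by
        rw [← Category.assoc (T.map _), ← T.map_comp,
          BraidedCategory.braiding_naturality_left_assoc]
end
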